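/- arXiv:2602.18684 — 2 statements merged into one kernel-verified Lean document; each statement's English description precedes it below -/
import Mathlib

section
/- For every fixed s ∈ ℝ and ψ ∈ ℝ, the map κ ↦ F(s, κ, ψ), defined for κ ≠ 0, tends to the point (0, 0, s) as κ → 0 along nonzero values; that is, the near-zero-curvature singularity of the PCC forward kinematics is removable, with straight-line configuration (0, 0, s) as the limit. -/
open Filter

/-- PCC forward kinematics of a single-section continuum robot. -/
noncomputable def pccF (s κ ψ : ℝ) : EuclideanSpace ℝ (Fin 3) :=
  !₂[(1 / κ) * (1 - Real.cos (s * κ)) * Real.cos ψ,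
    (1 / κ) * (1 - Real.cos (s * κ)) * Real.sin ψ,
    (1 / κ) * Real.sin (s * κ)]

lemma sin_slope_tendsto (s : ℝ) :
    Tendsto (fun κ : ℝ => (1 / κ) * Real.sin (s * κ)) (nhdsWithin 0 {0}ᶜ) (nhds s) := by
  have hinner : HasDerivAt (fun κ : ℝ => s * κ) s 0 := by
    simpa using (hasDerivAt_id (0:ℝ)).const_mul s
  have h1 : HasDerivAt (fun κ : ℝ => Real.sin (s * κ)) s 0 := by
    have := (Real.hasDerivAt_sin (s * 0)).comp 0 hinner; simp at this; exact this
  have h2 := (hasDerivAt_iff_tendsto_slope).mp h1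
  refine h2.congr fun κ => ?_
  simp [slope_def_field, div_eq_mul_inv, mul_comm]

lemma cos_slope_tendsto (s : ℝ) :
    Tendsto (fun κ : ℝ => (1 / κ) * (1 - Real.cos (s * κ))) (nhdsWithin 0 {0}ᶜ) (nhds 0) := by
  have hinner : HasDerivAt (fun κ : ℝ => s * κ) s 0 := by
    simpa using (hasDerivAt_id (0:ℝ)).const_mul s
  have h1 : HasDerivAt (fun κ : ℝ => 1 - Real.cos (s * κ)) 0 0 := by
    have := (hasDerivAt_const (0:ℝ) (1:ℝ)).sub ((Real.hasDerivAt_cos (s * 0)).comp 0 hinner); simp at this; exact this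
  have h2 := (hasDerivAt_iff_tendsto_slope).mp h1
  refine h2.congr fun κ => ?_
  simp [slope_def_field, div_eq_mul_inv, mul_comm]

/-- For fixed `s` and `ψ`, the map `κ ↦ F(s, κ, ψ)` tends to `(0, 0, s)` as `κ → 0`
along nonzero values: the near-zero-curvature singularity of the PCC forward
kinematics is removable, with the straight-line configuration `(0, 0, s)` as limit. -/
theorem pcc_zero_curvature_removable (s ψ : ℝ) :
    Tendsto (fun κ => pccF s κ ψ) (nhdsWithin 0 {0}ᶜ)
      (nhds (!₂[0, 0, s] : EuclideanSpace ℝ (Fin 3))) := by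
  rw [(PiLp.continuousLinearEquiv 2 ℝ (fun _ : Fin 3 => ℝ)).toHomeomorph.isInducing.tendsto_nhds_iff, tendsto_pi_nhds]
  intro i
  fin_cases i <;>
    simp only [pccF, Matrix.cons_val_zero, Matrix.cons_val_one, Matrix.head_cons,
      Fin.mk_zero, Fin.mk_one, Matrix.cons_val_two, Matrix.tail_cons,
        ContinuousLinearEquiv.coe_toHomeomorph, PiLp.coe_continuousLinearEquiv, Function.comp_apply,
        WithLp.ofLp_toLp]
  · simpa using (cos_slope_tendsto s).mul_const (Real.cos ψ)
  · simpa using (cos_slope_tendsto s).mul_const (Real.sin ψ)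
  · exact sin_slope_tendsto s
end

section
/- Fix s ∈ ℝ. As κ → 0 along nonzero values, M₁₇(s, κ) tends to the finite limit (r_a² ρ π s² / (2l))·(cos ψ_a cos ψ cos θ − sin ψ_a (cos φ sin ψ − cos ψ sin φ sin θ)); in particular, the apparent 1/κ² factor in M₁₇ is canceled by the κ²-scaling of the associated trigonometric combination, and the leading-order small-curvature behavior of M₁₇ is independent of κ and scales with the inertial factor ρ r_a². -/
open Filter Real

lemma aux_ne : ∀ᶠ x in nhdsWithin (0:ℝ) {0}ᶜ, x ≠ 0 :=
  eventually_mem_nhdsWithin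

lemma aux_lim1 : Tendsto (fun x : ℝ => (Real.cos x - 1 + x * Real.sin x) / x ^ 2)
    (nhdsWithin 0 {0}ᶜ) (nhds (1 / 2)) := by
  apply HasDerivAt.lhopital_zero_nhdsNE (f' := fun x => x * Real.cos x) (g' := fun x => 2 * x)
  · filter_upwards with x
    have h1 : HasDerivAt (fun x : ℝ => Real.cos x - 1 + x * Real.sin x)
        (-Real.sin x + (1 * Real.sin x + x * Real.cos x)) x :=
      ((Real.hasDerivAt_cos x).sub_const 1).add
        ((hasDerivAt_id x).mul (Real.hasDerivAt_sin x))
    convert h1 using 1; ring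
  · filter_upwards with x
    simpa using (hasDerivAt_pow 2 x)
  · filter_upwards [aux_ne] with x hx
    simpa using hx
  · have : Tendsto (fun x : ℝ => Real.cos x - 1 + x * Real.sin x) (nhds 0)
        (nhds (Real.cos 0 - 1 + 0 * Real.sin 0)) := (Continuous.tendsto (by fun_prop) 0)
    simp only [Real.cos_zero, Real.sin_zero, mul_zero, add_zero, sub_self] at this
    exact tendsto_nhdsWithin_of_tendsto_nhds this
  · have : Tendsto (fun x : ℝ => x ^ 2) (nhds (0:ℝ)) (nhds 0) := by
      simpa using (continuous_pow 2).tendsto (0:ℝ)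
    exact tendsto_nhdsWithin_of_tendsto_nhds this
  · have h : Tendsto (fun x : ℝ => Real.cos x / 2) (nhdsWithin 0 {0}ᶜ) (nhds (1/2)) := by
      have : Tendsto (fun x : ℝ => Real.cos x / 2) (nhds (0:ℝ)) (nhds (Real.cos 0 / 2)) :=
        Continuous.tendsto (by continuity) 0
      simp only [Real.cos_zero] at this
      exact tendsto_nhdsWithin_of_tendsto_nhds this
    refine h.congr' ?_
    filter_upwards [aux_ne] with x hx
    field_simp

lemma aux_lim2 : Tendsto (fun x : ℝ => (Real.sin x - x * Real.cos x) / x ^ 2)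
    (nhdsWithin 0 {0}ᶜ) (nhds 0) := by
  apply HasDerivAt.lhopital_zero_nhdsNE (f' := fun x => x * Real.sin x) (g' := fun x => 2 * x)
  · filter_upwards with x
    have h1 : HasDerivAt (fun x : ℝ => Real.sin x - x * Real.cos x)
        (Real.cos x - (1 * Real.cos x + x * -Real.sin x)) x :=
      (Real.hasDerivAt_sin x).sub ((hasDerivAt_id x).mul (Real.hasDerivAt_cos x))
    convert h1 using 1; ring
  · filter_upwards with x
    simpa using (hasDerivAt_pow 2 x)
  · filter_upwards [aux_ne] with x hx
    simpa using hx
  · have : Tendsto (fun x : ℝ => Real.sin x - x * Real.cos x) (nhds 0)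
        (nhds (Real.sin 0 - 0 * Real.cos 0)) := (Continuous.tendsto (by fun_prop) 0)
    simp only [Real.sin_zero, zero_mul, sub_zero, sub_self] at this
    exact tendsto_nhdsWithin_of_tendsto_nhds this
  · have : Tendsto (fun x : ℝ => x ^ 2) (nhds (0:ℝ)) (nhds 0) := by
      simpa using (continuous_pow 2).tendsto (0:ℝ)
    exact tendsto_nhdsWithin_of_tendsto_nhds this
  · have h : Tendsto (fun x : ℝ => Real.sin x / 2) (nhdsWithin 0 {0}ᶜ) (nhds 0) := by
      have : Tendsto (fun x : ℝ => Real.sin x / 2) (nhds (0:ℝ)) (nhds (Real.sin 0 / 2)) :=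
        Continuous.tendsto (by continuity) 0
      simp only [Real.sin_zero, zero_div] at this
      exact tendsto_nhdsWithin_of_tendsto_nhds this
    refine h.congr' ?_
    filter_upwards [aux_ne] with x hx
    field_simp

/-- The coupling mass-matrix entry `M₁₇(s, κ)` of the ACM dynamics. -/
noncomputable def M17 (ra ρ l φ θ ψ ψa s κ : ℝ) : ℝ :=
  (ra ^ 2 * ρ * π / κ ^ 2) *
    ((l * sin (κ * s / l) - κ * s * cos (κ * s / l)) *
        (sin φ * sin ψ + cos φ * cos ψ * sin θ) -
      sin ψa * (cos φ * sin ψ - cos ψ * sin φ * sin θ) *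
        (l * cos (κ * s / l) - l + κ * s * sin (κ * s / l)) +
      cos ψa * cos ψ * cos θ *
        (l * cos (κ * s / l) - l + κ * s * sin (κ * s / l)))

/-- For fixed `s`, as `κ → 0` along nonzero values, `M₁₇(s, κ)` tends to the finite
limit `(r_a² ρ π s² / (2l)) (cos ψ_a cos ψ cos θ − sin ψ_a (cos φ sin ψ − cos ψ sin φ sin θ))`:
the apparent `1/κ²` factor is canceled by the `κ²` scaling of the trigonometric
combination, and the leading-order small-curvature behavior of `M₁₇` is independent of
`κ` and scales with the inertial factor `ρ r_a²`. -/
theorem M17_small_curvature_limit (ra ρ l φ θ ψ ψa s : ℝ)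
    (hra : 0 < ra) (hρ : 0 < ρ) (hl : 0 < l) :
    Tendsto (fun κ => M17 ra ρ l φ θ ψ ψa s κ) (nhdsWithin 0 {0}ᶜ)
      (nhds ((ra ^ 2 * ρ * π * s ^ 2 / (2 * l)) *
        (cos ψa * cos ψ * cos θ -
          sin ψa * (cos φ * sin ψ - cos ψ * sin φ * sin θ)))) := by
  have hl0 : l ≠ 0 := hl.ne'
  rcases eq_or_ne s 0 with hs | hs
  · subst hs
    have : (fun κ : ℝ => M17 ra ρ l φ θ ψ ψa 0 κ) = fun _ => 0 := by
      funext κ; simp [M17]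
    rw [this]
    simpa using tendsto_const_nhds
  · set A := Real.sin φ * Real.sin ψ + Real.cos φ * Real.cos ψ * Real.sin θ with hA
    set B := Real.cos ψa * Real.cos ψ * Real.cos θ -
      Real.sin ψa * (Real.cos φ * Real.sin ψ - Real.cos ψ * Real.sin φ * Real.sin θ) with hB
    have hx : Tendsto (fun κ : ℝ => κ * s / l) (nhdsWithin 0 {0}ᶜ)
        (nhdsWithin 0 {0}ᶜ) := by
      apply tendsto_nhdsWithin_of_tendsto_nhds_of_eventually_within
      · have : Tendsto (fun κ : ℝ => κ * s / l) (nhds 0) (nhds (0 * s / l)) :=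
          Continuous.tendsto (by continuity) 0
        simpa using this.mono_left nhdsWithin_le_nhds
      · filter_upwards [aux_ne] with κ hκ
        simp only [Set.mem_compl_iff, Set.mem_singleton_iff]
        exact div_ne_zero (mul_ne_zero hκ hs) hl0
    have h1 := aux_lim1.comp hx
    have h2 := aux_lim2.comp hx
    have hcomb : Tendsto (fun κ : ℝ =>
        (ra ^ 2 * ρ * π * (s ^ 2 / l)) *
          (A * ((Real.sin (κ * s / l) - (κ * s / l) * Real.cos (κ * s / l)) / (κ * s / l) ^ 2) +
           B * ((Real.cos (κ * s / l) - 1 + (κ * s / l) * Real.sin (κ * s / l)) / (κ * s / l) ^ 2)))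
        (nhdsWithin 0 {0}ᶜ)
        (nhds ((ra ^ 2 * ρ * π * (s ^ 2 / l)) * (A * 0 + B * (1 / 2)))) :=
      Tendsto.const_mul _ ((h2.const_mul A).add (h1.const_mul B))
    have heq : (ra ^ 2 * ρ * π * (s ^ 2 / l)) * (A * 0 + B * (1 / 2)) =
        (ra ^ 2 * ρ * π * s ^ 2 / (2 * l)) * B := by
      rw [mul_zero, zero_add]
      field_simp
      try ring
      try exact Or.inl trivial
    rw [heq] at hcomb
    refine hcomb.congr' ?_
    filter_upwards [aux_ne] with κ hκ
    have hxne : κ * s / l ≠ 0 := div_ne_zero (mul_ne_zero hκ hs) hl0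
    simp only [M17, hA, hB]
    field_simp
    ring
end
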